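/- Let R be an integral domain and f ∈ R nonzero non-invertible, S = R[u,v]/(uv - f). Every ascending chain of principal ideals in R terminates if every ascending chain of principal ideals in S terminates. -/

import Mathlib

open MvPolynomial

/-- The suspension ring `S = R[u,v]/(uv - f)`. -/
abbrev Susp (R : Type*) [CommRing R] (f : R) : Type _ :=
  MvPolynomial (Fin 2) R ⧸
    Ideal.span {(X 0 * X 1 - C f : MvPolynomial (Fin 2) R)}

/-- The image of the variable `u` in `S`. -/
noncomputable abbrev suspU (R : Type*) [CommRing R] (f : R) : Susp R f :=
  Ideal.Quotient.mk _ (X 0)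

/-- The image of the variable `v` in `S`. -/
noncomputable abbrev suspV (R : Type*) [CommRing R] (f : R) : Susp R f :=
  Ideal.Quotient.mk _ (X 1)

/-- The ring homomorphism `R[u,v] → R[T,T⁻¹]`, `u ↦ T`, `v ↦ f·T⁻¹`. -/
noncomputable def suspToLaurent (R : Type*) [CommRing R] (f : R) :
    MvPolynomial (Fin 2) R →+* LaurentPolynomial R :=
  (MvPolynomial.aeval
    ![LaurentPolynomial.T 1, LaurentPolynomial.C f * LaurentPolynomial.T (-1)]).toRingHom

theorem suspToLaurent_C (R : Type*) [CommRing R] (f r : R) :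
    suspToLaurent R f (C r) = LaurentPolynomial.C r := by
  show (MvPolynomial.aeval _) (C r) = _
  rw [MvPolynomial.aeval_C, LaurentPolynomial.C_eq_algebraMap]

theorem susp_ker (R : Type*) [CommRing R] (f : R) :
    suspToLaurent R f (X 0 * X 1 - C f) = 0 := by
  have h1 : suspToLaurent R f (X 0) = LaurentPolynomial.T 1 := by
    simp [suspToLaurent]
  have h2 : suspToLaurent R f (X 1) = LaurentPolynomial.C f * LaurentPolynomial.T (-1) := by
    simp [suspToLaurent]
  rw [map_sub, map_mul, h1, h2, suspToLaurent_C]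
  rw [← LaurentPolynomial.T_mul, ← mul_assoc, ← LaurentPolynomial.T_add]
  norm_num [LaurentPolynomial.T_zero]

theorem laurent_C_dvd {R : Type*} [CommRing R] {a b : R}
    (h : LaurentPolynomial.C b ∣ LaurentPolynomial.C a) : b ∣ a := by
  obtain ⟨s, hs⟩ := h
  refine ⟨s.coeff 0, ?_⟩
  have := congrArg (fun p : LaurentPolynomial R => p.coeff 0) hs
  simp only [LaurentPolynomial.C_apply, if_true] at this
  rw [this, ← LaurentPolynomial.single_eq_C, AddMonoidAlgebra.coeff_single_zero_mul]

/-- `suspToLaurent` descends to the quotient `Susp R f`. -/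
noncomputable def suspHom (R : Type*) [CommRing R] (f : R) :
    Susp R f →+* LaurentPolynomial R :=
  Ideal.Quotient.lift _ (suspToLaurent R f) (by
    intro p hp
    rw [Ideal.mem_span_singleton] at hp
    obtain ⟨q, rfl⟩ := hp
    rw [map_mul, susp_ker, zero_mul])

/-- Divisibility of elements of `R` in `S` reflects to divisibility in `R`. -/
theorem susp_dvd {R : Type*} [CommRing R] (f a b : R)
    (h : (Ideal.Quotient.mk _ (C b) : Susp R f) ∣ Ideal.Quotient.mk _ (C a)) : b ∣ a := by
  apply laurent_C_dvd (b := b)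
  have := map_dvd (suspHom R f) h
  simpa only [suspHom, Ideal.Quotient.lift_mk, suspToLaurent_C] using this

/-- If every ascending chain of principal ideals in `S = R[u,v]/(uv - f)`
terminates, then every ascending chain of principal ideals in `R` terminates. -/
theorem accp_of_accp_suspension (R : Type*) [CommRing R] [IsDomain R] (f : R)
    (hf0 : f ≠ 0) (hf : ¬ IsUnit f)
    (hS : ∀ c : ℕ → Susp R f,
      (∀ n, Ideal.span {c n} ≤ Ideal.span {c (n + 1)}) →
      ∃ N, ∀ n, N ≤ n → Ideal.span {c n} = Ideal.span {c N}) :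
    ∀ a : ℕ → R,
      (∀ n, Ideal.span {a n} ≤ Ideal.span {a (n + 1)}) →
      ∃ N, ∀ n, N ≤ n → Ideal.span {a n} = Ideal.span {a N} := by
  intro a ha
  have hdvd : ∀ n, a (n + 1) ∣ a n :=
    fun n => Ideal.span_singleton_le_span_singleton.mp (ha n)
  set c : ℕ → Susp R f := fun n => Ideal.Quotient.mk _ (C (a n)) with hc_def
  have hc : ∀ n, Ideal.span {c n} ≤ Ideal.span {c (n + 1)} := by
    intro n
    rw [Ideal.span_singleton_le_span_singleton]
    exact map_dvd (Ideal.Quotient.mk _) (map_dvd (C : R →+* MvPolynomial (Fin 2) R) (hdvd n))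
  obtain ⟨N, hN⟩ := hS c hc
  refine ⟨N, fun n hn => le_antisymm ?_ ?_⟩
  · rw [Ideal.span_singleton_le_span_singleton]
    have h := (hN n hn).le
    rw [Ideal.span_singleton_le_span_singleton] at h
    exact susp_dvd f (a n) (a N) h
  · induction n, hn using Nat.le_induction with
    | base => exact le_rfl
    | succ m hm ih => exact ih.trans (ha m)
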